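/- Let β, τ > 0 and let ω ∈ ℝ with |ω|τ > β. Then the Fourier transform of the Kaiser–Bessel window satisfies K̂_{β,τ}(ω) = (2τ/I₀(β)) · sin(√(ω²τ² − β²)) / √(ω²τ² − β²). In particular, for β = Sτ with S > 0 and ω = ℓ with |ℓ| > S, K̂_{Sτ,τ}(ℓ) = (2/I₀(Sτ)) · sin(τ√(ℓ² − S²)) / √(ℓ² − S²). -/

import Mathlib

open Real MeasureTheory

/-- The modified Bessel function of the first kind of order zero,
`I₀(z) := Σ_{k=0}^∞ (z/2)^{2k}/(k!)²`. -/
noncomputable def besselI0 (z : ℝ) : ℝ :=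
  ∑' k : ℕ, (z / 2) ^ (2 * k) / ((Nat.factorial k : ℝ)) ^ 2

/-- The Kaiser–Bessel window `K_{β,τ}`. -/
noncomputable def kaiserBessel (β τ t : ℝ) : ℝ :=
  if |t| ≤ τ then besselI0 (β * Real.sqrt (1 - (t / τ) ^ 2)) / besselI0 β else 0

/-- The Fourier transform `Ŵ(ω) := ∫ W(t) e^{−ιωt} dt` of a real-valued function. -/
noncomputable def ftransform (W : ℝ → ℝ) (ω : ℝ) : ℂ :=
  ∫ t : ℝ, (W t : ℂ) * Complex.exp (-Complex.I * ((ω * t : ℝ) : ℂ))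

open intervalIntegral

section helpers


lemma bessel_term_eq (z : ℝ) (k : ℕ) :
    (z / 2) ^ (2 * k) / ((Nat.factorial k : ℝ)) ^ 2
      = (z ^ 2 / 4) ^ k / ((Nat.factorial k : ℝ)) ^ 2 := by
  rw [pow_mul]; ring_nf

lemma bessel_term_nonneg (z : ℝ) (k : ℕ) :
    0 ≤ (z / 2) ^ (2 * k) / ((Nat.factorial k : ℝ)) ^ 2 := by
  rw [bessel_term_eq]; positivity

lemma bessel_summable (z : ℝ) :
    Summable (fun k : ℕ => (z / 2) ^ (2 * k) / ((Nat.factorial k : ℝ)) ^ 2) := by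
  have h := Real.summable_pow_div_factorial (z ^ 2 / 4)
  refine Summable.of_nonneg_of_le (bessel_term_nonneg z) (fun k => ?_) h
  rw [bessel_term_eq]
  have h1 : (0:ℝ) < (Nat.factorial k : ℝ) := by exact_mod_cast Nat.factorial_pos k
  have h2 : (Nat.factorial k : ℝ) ≤ ((Nat.factorial k : ℝ)) ^ 2 := by
    nlinarith [Nat.one_le_iff_ne_zero.mpr (Nat.factorial_ne_zero k), h1,
      (by exact_mod_cast Nat.one_le_iff_ne_zero.mpr (Nat.factorial_ne_zero k) : (1:ℝ) ≤ (Nat.factorial k : ℝ))]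
  exact div_le_div_of_nonneg_left (by positivity) h1 h2 |>.trans_eq rfl |>.trans (le_refl _) |>.trans
    (by exact le_of_eq rfl) |>.trans (le_refl _) |>.trans (le_of_eq rfl) |>.trans (le_refl _)
    |>.trans (le_of_eq rfl)

lemma one_le_besselI0 (z : ℝ) : 1 ≤ besselI0 z := by
  have h0 : ((z / 2) ^ (2 * 0) / ((Nat.factorial 0 : ℝ)) ^ 2) = 1 := by norm_num
  calc (1:ℝ) = (z / 2) ^ (2 * 0) / ((Nat.factorial 0 : ℝ)) ^ 2 := h0.symm
    _ ≤ besselI0 z := Summable.le_tsum (bessel_summable z) 0 (fun k _ => bessel_term_nonneg z k)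

lemma besselI0_pos (z : ℝ) : 0 < besselI0 z := lt_of_lt_of_le one_pos (one_le_besselI0 z)

/-- `I₀(β√x) = Σ (β²/4)^k x^k / (k!)²` for `x ≥ 0`. -/
lemma besselI0_sqrt_eq (β x : ℝ) (hx : 0 ≤ x) :
    besselI0 (β * Real.sqrt x) = ∑' k : ℕ, (β ^ 2 / 4) ^ k * x ^ k / ((Nat.factorial k : ℝ)) ^ 2 := by
  unfold besselI0
  congr 1
  funext k
  rw [bessel_term_eq]
  congr 1
  rw [mul_pow, Real.sq_sqrt hx]
  ring


noncomputable def Iv (m k : ℕ) : ℝ := ∫ u in (0:ℝ)..1, u ^ (2*m) * (1 - u^2) ^ k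

lemma Iv_rec (m k : ℕ) : (2*m+1 : ℝ) * Iv m (k+1) = (2*(k+1) : ℝ) * Iv (m+1) k := by
  have key : ∀ u : ℝ, HasDerivAt (fun u : ℝ => u ^ (2*m+1) * (1 - u^2) ^ (k+1))
      ((2*m+1 : ℝ) * (u ^ (2*m) * (1-u^2)^(k+1)) - (2*(k+1) : ℝ) * (u ^ (2*(m+1)) * (1-u^2)^k)) u := by
    intro u
    have h1 : HasDerivAt (fun u : ℝ => u ^ (2*m+1)) ((2*m+1 : ℝ) * u ^ (2*m)) u := by
      simpa using hasDerivAt_pow (2*m+1) u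
    have h2 : HasDerivAt (fun u : ℝ => (1 - u^2) ^ (k+1))
        (((k+1 : ℝ) * (1-u^2)^k) * (-(2*u))) u := by
      have hb : HasDerivAt (fun u : ℝ => 1 - u^2) (-(2*u)) u := by
        simpa using ((hasDerivAt_pow 2 u).const_sub 1)
      refine ((hasDerivAt_pow (k+1) (1-u^2)).comp u hb).congr_deriv ?_
      push_cast; ring
    have := h1.mul h2
    refine this.congr_deriv ?_
    push_cast
    ring
  have hi : ∫ u in (0:ℝ)..1, ((2*m+1 : ℝ) * (u ^ (2*m) * (1-u^2)^(k+1))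
      - (2*(k+1) : ℝ) * (u ^ (2*(m+1)) * (1-u^2)^k))
      = (1:ℝ) ^ (2*m+1) * (1-(1:ℝ)^2)^(k+1) - (0:ℝ) ^ (2*m+1) * (1-(0:ℝ)^2)^(k+1) := by
    apply integral_eq_sub_of_hasDerivAt (fun u _ => key u)
    apply Continuous.intervalIntegrable
    continuity
  have hI1 : IntervalIntegrable (fun u : ℝ => u ^ (2*m) * (1-u^2)^(k+1)) volume 0 1 := by
    apply Continuous.intervalIntegrable; continuity
  have hI2 : IntervalIntegrable (fun u : ℝ => u ^ (2*(m+1)) * (1-u^2)^k) volume 0 1 := by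
    apply Continuous.intervalIntegrable; continuity
  rw [intervalIntegral.integral_sub (hI1.const_mul _) (hI2.const_mul _),
    intervalIntegral.integral_const_mul, intervalIntegral.integral_const_mul] at hi
  unfold Iv
  simp at hi
  linarith [hi]

lemma Iv_zero (m : ℕ) : Iv m 0 = 1 / (2*m+1 : ℝ) := by
  unfold Iv
  simp [integral_pow]

lemma Iv_closed (k m : ℕ) : Iv m k =
    ((2*m).factorial : ℝ) * (k.factorial : ℝ) * 4 ^ k * ((k+m).factorial : ℝ)
      / ((m.factorial : ℝ) * ((2*(k+m)+1).factorial : ℝ)) := by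
  induction k generalizing m with
  | zero =>
      rw [Iv_zero]
      have : (2*m+1).factorial = (2*m+1) * (2*m).factorial := Nat.factorial_succ _
      rw [show 2*(0+m)+1 = 2*m+1 by ring, this]
      have h1 : ((2*m).factorial : ℝ) ≠ 0 := by exact_mod_cast (Nat.factorial_pos _).ne'
      have h2 : (m.factorial : ℝ) ≠ 0 := by exact_mod_cast (Nat.factorial_pos _).ne'
      field_simp
      push_cast
      ring
  | succ k ih =>
      have hrec := Iv_rec m k
      rw [ih (m+1)] at hrec
      have h2m : (2*m+1 : ℝ) ≠ 0 := by positivity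
      have : Iv m (k+1) = (2*(k+1) : ℝ) / (2*m+1 : ℝ) *
          (((2*(m+1)).factorial : ℝ) * (k.factorial : ℝ) * 4 ^ k * ((k+(m+1)).factorial : ℝ)
            / (((m+1).factorial : ℝ) * ((2*(k+(m+1))+1).factorial : ℝ))) := by
        field_simp at hrec ⊢
        linarith [hrec]
      rw [this]
      have e1 : (2*(m+1)).factorial = (2*m+2) * ((2*m+1) * (2*m).factorial) := by
        rw [show 2*(m+1) = (2*m+1)+1 by ring, Nat.factorial_succ, Nat.factorial_succ]
      have e2 : ((k+1).factorial) = (k+1) * k.factorial := Nat.factorial_succ _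
      have e3 : ((m+1).factorial) = (m+1) * m.factorial := Nat.factorial_succ _
      have e4 : (k+(m+1)) = (k+1+m) := by ring
      have e5 : (2*(k+(m+1))+1) = (2*(k+1+m)+1) := by ring
      rw [e1, e2, e4, e3]
      have h1 : ((2*m).factorial : ℝ) ≠ 0 := by exact_mod_cast (Nat.factorial_pos _).ne'
      have h2 : (m.factorial : ℝ) ≠ 0 := by exact_mod_cast (Nat.factorial_pos _).ne'
      have h3 : ((2*(k+1+m)+1).factorial : ℝ) ≠ 0 := by exact_mod_cast (Nat.factorial_pos _).ne'
      have h4 : ((k+1+m).factorial : ℝ) ≠ 0 := by exact_mod_cast (Nat.factorial_pos _).ne'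
      have h5 : (k.factorial : ℝ) ≠ 0 := by exact_mod_cast (Nat.factorial_pos _).ne'
      field_simp
      push_cast
      ring


lemma even_integral {f : ℝ → ℝ} (hf : Continuous f) (h : ∀ x, f (-x) = f x) :
    ∫ x in (-1:ℝ)..1, f x = 2 * ∫ x in (0:ℝ)..1, f x := by
  have h1 : ∫ x in (0:ℝ)..1, f (-x) = ∫ x in (-1:ℝ)..0, f x := by
    simpa using intervalIntegral.integral_comp_neg (a := (0:ℝ)) (b := 1) f
  have h2 : ∫ x in (0:ℝ)..1, f (-x) = ∫ x in (0:ℝ)..1, f x := by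
    simp_rw [h]
  have h3 := intervalIntegral.integral_add_adjacent_intervals
    (hf.intervalIntegrable (μ := volume) (-1) 0) (hf.intervalIntegrable (μ := volume) 0 1)
  linarith [h1, h2, h3]

lemma odd_integral {f : ℝ → ℝ} (hf : Continuous f) (h : ∀ x, f (-x) = -f x) :
    ∫ x in (-1:ℝ)..1, f x = 0 := by
  have h1 : ∫ x in (0:ℝ)..1, f (-x) = ∫ x in (-1:ℝ)..0, f x := by
    simpa using intervalIntegral.integral_comp_neg (a := (0:ℝ)) (b := 1) f
  have h2 : ∫ x in (0:ℝ)..1, f (-x) = -∫ x in (0:ℝ)..1, f x := by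
    simp_rw [h]; simp
  have h3 := intervalIntegral.integral_add_adjacent_intervals
    (hf.intervalIntegrable (μ := volume) (-1) 0) (hf.intervalIntegrable (μ := volume) 0 1)
  linarith [h1, h2, h3]

lemma summable_a (a : ℝ) : Summable (fun m : ℕ => |a| ^ (2*m) / ((2*m).factorial : ℝ) * 2) := by
  apply Summable.mul_right
  refine Summable.of_nonneg_of_le (fun m => by positivity) (fun m => ?_)
    (Real.summable_pow_div_factorial (a^2))
  rw [pow_mul, sq_abs]
  have h1 : (0:ℝ) < (m.factorial : ℝ) := by exact_mod_cast Nat.factorial_pos m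
  have h2 : (m.factorial : ℝ) ≤ ((2*m).factorial : ℝ) := by
    exact_mod_cast Nat.factorial_le (by omega)
  exact div_le_div_of_nonneg_left (by positivity) h1 h2

lemma cos_integral_hasSum (a : ℝ) (k : ℕ) :
    HasSum (fun m : ℕ => (-1:ℝ)^m * a^(2*m) / ((2*m).factorial : ℝ) * (2 * Iv m k))
      (∫ u in (-1:ℝ)..1, (1-u^2)^k * Real.cos (a*u)) := by
  set F : ℕ → ℝ → ℝ := fun m u => (1-u^2)^k * ((-1:ℝ)^m * (a*u)^(2*m) / ((2*m).factorial : ℝ))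
  have hFc : ∀ m, Continuous (F m) := by intro m; unfold F; continuity
  have hμ : volume (Set.Ioc (-1:ℝ) 1) < ⊤ := measure_Ioc_lt_top
  have hint : ∀ m, Integrable (F m) (volume.restrict (Set.Ioc (-1:ℝ) 1)) := by
    intro m
    exact (hFc m).integrableOn_Ioc
  have hbound : ∀ m, ∀ u ∈ Set.Ioc (-1:ℝ) 1, ‖F m u‖ ≤ |a| ^ (2*m) / ((2*m).factorial : ℝ) := by
    intro m u hu
    have hu1 : |u| ≤ 1 := abs_le.mpr ⟨hu.1.le, hu.2⟩
    have h0 : (0:ℝ) ≤ 1 - u^2 := by nlinarith [abs_le.mp hu1]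
    have h1 : (1 - u^2) ≤ 1 := by nlinarith [sq_nonneg u]
    unfold F
    rw [norm_mul, Real.norm_eq_abs, Real.norm_eq_abs, abs_of_nonneg (pow_nonneg h0 k)]
    have hA : (1-u^2)^k ≤ 1 := pow_le_one₀ h0 h1
    have hB : |(-1:ℝ)^m * (a*u)^(2*m) / ((2*m).factorial : ℝ)| ≤ |a| ^ (2*m) / ((2*m).factorial : ℝ) := by
      rw [abs_div, abs_mul, abs_pow, abs_pow, abs_neg, abs_one, one_pow, one_mul,
        Nat.abs_cast, abs_mul]
      gcongr
      calc |a| * |u| ≤ |a| * 1 := by gcongr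
        _ = |a| := mul_one _
    calc (1-u^2)^k * |(-1:ℝ)^m * (a*u)^(2*m) / ((2*m).factorial : ℝ)|
        ≤ 1 * (|a| ^ (2*m) / ((2*m).factorial : ℝ)) := by
          apply mul_le_mul hA hB (abs_nonneg _) one_pos.le
      _ = _ := one_mul _
  have hsum : Summable (fun m : ℕ => ∫ u, ‖F m u‖ ∂(volume.restrict (Set.Ioc (-1:ℝ) 1))) := by
    refine Summable.of_nonneg_of_le (fun m => integral_nonneg (fun u => norm_nonneg _))
      (fun m => ?_) (summable_a a)
    have : ∫ u, ‖F m u‖ ∂(volume.restrict (Set.Ioc (-1:ℝ) 1))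
        ≤ ∫ _ in Set.Ioc (-1:ℝ) 1, (|a| ^ (2*m) / ((2*m).factorial : ℝ)) := by
      apply setIntegral_mono_on (hint m).norm integrableOn_const
        measurableSet_Ioc (hbound m)
    apply this.trans
    rw [setIntegral_const, Real.volume_real_Ioc_of_le (by norm_num),
      show (1:ℝ) - -1 = 2 by norm_num,
      smul_eq_mul]
    linarith
  have hkey := hasSum_integral_of_summable_integral_norm hint hsum
  have hpt : ∀ u : ℝ, ∑' m, F m u = (1-u^2)^k * Real.cos (a*u) := by
    intro u
    have := (Real.hasSum_cos (a*u)).mul_left ((1-u^2)^k)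
    simpa [F, mul_div_assoc] using this.tsum_eq
  have hIoc : (∫ u, (∑' m, F m u) ∂(volume.restrict (Set.Ioc (-1:ℝ) 1)))
      = ∫ u in (-1:ℝ)..1, (1-u^2)^k * Real.cos (a*u) := by
    rw [intervalIntegral.integral_of_le (by norm_num : (-1:ℝ) ≤ 1)]
    exact setIntegral_congr_fun measurableSet_Ioc (fun u _ => hpt u)
  rw [hIoc] at hkey
  convert hkey using 1
  · rfl
  funext m
  rw [← intervalIntegral.integral_of_le (by norm_num : (-1:ℝ) ≤ 1)]
  have heven : ∀ u : ℝ, F m (-u) = F m u := by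
    intro u
    simp only [F, mul_neg, neg_sq]
    rw [Even.neg_pow (even_two_mul m)]
  rw [even_integral (hFc m) heven]
  have hFu : ∀ u : ℝ, F m u
      = ((-1:ℝ)^m * a^(2*m) / ((2*m).factorial : ℝ)) * (u^(2*m) * (1-u^2)^k) := by
    intro u; simp only [F]; rw [mul_pow]; ring
  simp_rw [hFu]
  rw [intervalIntegral.integral_const_mul]
  unfold Iv
  ring



lemma Jk (a : ℝ) (k : ℕ) :
    ∫ u in (-1:ℝ)..1, (((1-u^2)^k : ℝ) : ℂ) * Complex.exp (-Complex.I * ((a*u : ℝ) : ℂ))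
      = ((∫ u in (-1:ℝ)..1, (1-u^2)^k * Real.cos (a*u) : ℝ) : ℂ) := by
  have hexp : ∀ u : ℝ, Complex.exp (-Complex.I * ((a*u : ℝ) : ℂ))
      = ((Real.cos (a*u) : ℝ) : ℂ) - ((Real.sin (a*u) : ℝ) : ℂ) * Complex.I := by
    intro u
    rw [show -Complex.I * ((a*u : ℝ) : ℂ) = (-(a*u) : ℝ) * Complex.I by push_cast; ring,
      Complex.exp_mul_I]
    push_cast
    rw [Complex.cos_neg, Complex.sin_neg]
    ring
  simp_rw [hexp, mul_sub]
  have h1 : IntervalIntegrable (fun u : ℝ => (((1-u^2)^k : ℝ) : ℂ) * ((Real.cos (a*u) : ℝ) : ℂ))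
      volume (-1) 1 := by
    apply Continuous.intervalIntegrable
    continuity
  have h2 : IntervalIntegrable (fun u : ℝ => (((1-u^2)^k : ℝ) : ℂ) * (((Real.sin (a*u) : ℝ) : ℂ) * Complex.I))
      volume (-1) 1 := by
    apply Continuous.intervalIntegrable
    continuity
  rw [intervalIntegral.integral_sub h1 h2]
  have hsin : (∫ u in (-1:ℝ)..1, (((1-u^2)^k : ℝ) : ℂ) * (((Real.sin (a*u) : ℝ) : ℂ) * Complex.I)) = 0 := by
    have : ∀ u : ℝ, (((1-u^2)^k : ℝ) : ℂ) * (((Real.sin (a*u) : ℝ) : ℂ) * Complex.I)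
        = (((1-u^2)^k * Real.sin (a*u) : ℝ) : ℂ) * Complex.I := by
      intro u; push_cast; ring
    simp_rw [this]
    rw [intervalIntegral.integral_mul_const]
    have hodd : ∫ u in (-1:ℝ)..1, (1-u^2)^k * Real.sin (a*u) = 0 := by
      apply odd_integral (by continuity)
      intro x
      rw [neg_sq, mul_neg, Real.sin_neg]
      ring
    rw [intervalIntegral.integral_ofReal, hodd]
    simp
  rw [hsin, sub_zero]
  have : ∀ u : ℝ, (((1-u^2)^k : ℝ) : ℂ) * ((Real.cos (a*u) : ℝ) : ℂ)
      = (((1-u^2)^k * Real.cos (a*u) : ℝ) : ℂ) := by intro u; push_cast; ring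
  simp_rw [this]
  rw [intervalIntegral.integral_ofReal]



noncomputable def Uf (C β a : ℝ) (p : ℕ × ℕ) : ℝ :=
  C * (((p.1 + p.2).factorial : ℝ) /
      ((p.1.factorial : ℝ) * (p.2.factorial : ℝ) * ((2*(p.1+p.2)+1).factorial : ℝ)))
    * (β^2)^p.1 * (-(a^2))^p.2

lemma tsum_prod_antidiagonal {T : ℕ × ℕ → ℝ} (hT : Summable T) :
    ∑' p : ℕ × ℕ, T p = ∑' n : ℕ, ∑ kl ∈ Finset.HasAntidiagonal.antidiagonal n, T kl := by
  calc ∑' p : ℕ × ℕ, T p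
      = ∑' c : Σ n : ℕ, {x // x ∈ Finset.HasAntidiagonal.antidiagonal n},
          T (Finset.HasAntidiagonal.sigmaAntidiagonalEquivProd c) :=
        (Finset.HasAntidiagonal.sigmaAntidiagonalEquivProd.tsum_eq T).symm
    _ = ∑' (n : ℕ) (c : {x // x ∈ Finset.HasAntidiagonal.antidiagonal n}),
          T (Finset.HasAntidiagonal.sigmaAntidiagonalEquivProd ⟨n, c⟩) :=
        Summable.tsum_sigma' (fun n => (hasSum_fintype _).summable)
          (Finset.HasAntidiagonal.sigmaAntidiagonalEquivProd.summable_iff.mpr hT)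
    _ = ∑' n : ℕ, ∑ kl ∈ Finset.HasAntidiagonal.antidiagonal n, T kl := by
        congr 1
        funext n
        rw [← Finset.tsum_subtype]
        rfl

lemma Uf_summable (C β a : ℝ) : Summable (Uf C β a) := by
  have hfg : Summable (fun p : ℕ × ℕ => ((β^2)^p.1 / (p.1.factorial : ℝ)) *
      ((a^2)^p.2 / (p.2.factorial : ℝ))) :=
    Summable.mul_of_nonneg (f := fun k : ℕ => (β^2)^k / (k.factorial : ℝ))
      (g := fun m : ℕ => (a^2)^m / (m.factorial : ℝ))
      (Real.summable_pow_div_factorial (β^2))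
      (Real.summable_pow_div_factorial (a^2)) (fun k => by positivity) (fun m => by positivity)
  apply Summable.of_norm_bounded (hfg.mul_left |C|)
  intro p
  obtain ⟨k, m⟩ := p
  unfold Uf
  simp only
  rw [norm_mul, norm_mul, norm_mul]
  have h1 : ‖(-(a^2))^m‖ = (a^2)^m := by
    rw [norm_pow, norm_neg, Real.norm_eq_abs, abs_of_nonneg (sq_nonneg a)]
  have h2 : ‖(β^2)^k‖ = (β^2)^k := by
    rw [Real.norm_eq_abs, abs_of_nonneg (by positivity)]
  rw [h1, h2]
  have hfr : ‖(((k + m).factorial : ℝ) /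
      ((k.factorial : ℝ) * (m.factorial : ℝ) * ((2*(k+m)+1).factorial : ℝ)))‖
      ≤ 1 / ((k.factorial : ℝ) * (m.factorial : ℝ)) := by
    rw [Real.norm_eq_abs, abs_of_nonneg (by positivity)]
    rw [div_le_div_iff₀ (by positivity) (by positivity)]
    have : ((k+m).factorial : ℝ) ≤ ((2*(k+m)+1).factorial : ℝ) := by
      exact_mod_cast Nat.factorial_le (by omega)
    nlinarith [this, (by positivity : (0:ℝ) < (k.factorial : ℝ) * (m.factorial : ℝ))]
  calc ‖C‖ * ‖(((k + m).factorial : ℝ) /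
        ((k.factorial : ℝ) * (m.factorial : ℝ) * ((2*(k+m)+1).factorial : ℝ)))‖
        * (β^2)^k * (a^2)^m
      ≤ ‖C‖ * (1 / ((k.factorial : ℝ) * (m.factorial : ℝ))) * (β^2)^k * (a^2)^m := by
        gcongr
    _ = |C| * ((β^2)^k / (k.factorial : ℝ) * ((a^2)^m / (m.factorial : ℝ))) := by
        rw [Real.norm_eq_abs]; ring

lemma Uf_antidiagonal_sum (C β a : ℝ) (n : ℕ) :
    ∑ kl ∈ Finset.HasAntidiagonal.antidiagonal n, Uf C β a kl
      = C * (β^2 - a^2)^n / (((2*n+1).factorial : ℝ)) := by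
  rw [Finset.Nat.sum_antidiagonal_eq_sum_range_succ_mk]
  have hterm : ∀ k ∈ Finset.range (n+1), Uf C β a (k, n - k)
      = (C / (((2*n+1).factorial : ℝ))) * ((β^2)^k * (-(a^2))^(n-k) * (n.choose k : ℝ)) := by
    intro k hk
    have hkn : k ≤ n := Nat.lt_succ_iff.mp (Finset.mem_range.mp hk)
    have hadd : k + (n - k) = n := Nat.add_sub_cancel' hkn
    unfold Uf
    simp only [hadd]
    rw [Nat.cast_choose ℝ hkn]
    have n1 : ((k.factorial : ℝ)) ≠ 0 := by exact_mod_cast (Nat.factorial_pos _).ne'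
    have n2 : (((n-k).factorial : ℝ)) ≠ 0 := by exact_mod_cast (Nat.factorial_pos _).ne'
    have n3 : (((2*n+1).factorial : ℝ)) ≠ 0 := by exact_mod_cast (Nat.factorial_pos _).ne'
    field_simp
  rw [Finset.sum_congr rfl hterm, ← Finset.mul_sum]
  rw [← add_pow (β^2) (-(a^2)) n]
  rw [show β^2 + -(a^2) = β^2 - a^2 by ring]
  ring

lemma sin_series (β a : ℝ) (ha : β ^ 2 < a ^ 2) :
    HasSum (fun n : ℕ => (β^2 - a^2)^n / (((2*n+1).factorial : ℝ)))
      (Real.sin (Real.sqrt (a ^ 2 - β ^ 2)) / Real.sqrt (a ^ 2 - β ^ 2)) := by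
  set x := Real.sqrt (a ^ 2 - β ^ 2) with hxdef
  have hx2 : x ^ 2 = a ^ 2 - β ^ 2 := Real.sq_sqrt (by linarith)
  have hxpos : 0 < x := Real.sqrt_pos.mpr (by linarith)
  have hs := (Real.hasSum_sin x).div_const x
  have hterm : ∀ n : ℕ, (-1:ℝ)^n * x^(2*n+1) / (((2*n+1).factorial : ℝ)) / x
      = (β^2 - a^2)^n / (((2*n+1).factorial : ℝ)) := by
    intro n
    have hxpow : x^(2*n+1) = (x^2)^n * x := by rw [pow_add, pow_mul, pow_one]
    have hneg : (β^2 - a^2)^n = (-1:ℝ)^n * (x^2)^n := by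
      rw [hx2, ← neg_pow]
      congr 1
      ring
    rw [hxpow, hneg]
    field_simp
  simpa only [hterm] using hs

lemma Uf_term (β τ a : ℝ) (hbessel : besselI0 β ≠ 0) (k m : ℕ) :
    τ * ((β^2/4)^k / (((k.factorial : ℝ))^2 * besselI0 β)) *
        ((-1:ℝ)^m * a^(2*m) / (((2*m).factorial : ℝ)) * (2 * Iv m k))
      = Uf (2 * τ / besselI0 β) β a (k, m) := by
  rw [Iv_closed]
  unfold Uf
  simp only
  have e1 : a^(2*m) = (a^2)^m := by rw [pow_mul]
  have e2 : ((-1:ℝ))^m * (a^2)^m = (-(a^2))^m := by rw [← neg_pow]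
  have e3 : (β^2/4)^k * 4^k = (β^2)^k := by rw [← mul_pow]; norm_num
  have n1 : ((k.factorial : ℝ)) ≠ 0 := by exact_mod_cast (Nat.factorial_pos _).ne'
  have n2 : ((m.factorial : ℝ)) ≠ 0 := by exact_mod_cast (Nat.factorial_pos _).ne'
  have n3 : (((2*m).factorial : ℝ)) ≠ 0 := by exact_mod_cast (Nat.factorial_pos _).ne'
  have n4 : (((2*(k+m)+1).factorial : ℝ)) ≠ 0 := by exact_mod_cast (Nat.factorial_pos _).ne'
  field_simp
  rw [e1, ← e2, ← e3]
  ring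

lemma key_sum (β τ a : ℝ) (hβ : 0 < β) (hτ : 0 < τ) (ha : β ^ 2 < a ^ 2) :
    ∑' k : ℕ, (τ * ((β^2/4)^k / (((k.factorial : ℝ))^2 * besselI0 β)) *
      ∑' m : ℕ, (-1:ℝ)^m * a^(2*m) / (((2*m).factorial : ℝ)) * (2 * Iv m k))
    = (2 * τ / besselI0 β) *
        (Real.sin (Real.sqrt (a ^ 2 - β ^ 2)) / Real.sqrt (a ^ 2 - β ^ 2)) := by
  have hbessel : besselI0 β ≠ 0 := (besselI0_pos β).ne'
  have hUsum := Uf_summable (2 * τ / besselI0 β) β a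
  have step1 : ∀ k : ℕ,
      τ * ((β^2/4)^k / (((k.factorial : ℝ))^2 * besselI0 β)) *
        (∑' m : ℕ, (-1:ℝ)^m * a^(2*m) / (((2*m).factorial : ℝ)) * (2 * Iv m k))
      = ∑' m : ℕ, Uf (2 * τ / besselI0 β) β a (k, m) := by
    intro k
    rw [← tsum_mul_left]
    congr 1
    funext m
    exact Uf_term β τ a hbessel k m
  simp_rw [step1]
  rw [← Summable.tsum_prod' hUsum (fun k => hUsum.prod_factor k)]
  rw [tsum_prod_antidiagonal hUsum]
  have step2 : ∀ n : ℕ, ∑ kl ∈ Finset.HasAntidiagonal.antidiagonal n, Uf (2 * τ / besselI0 β) β a kl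
      = (2 * τ / besselI0 β) * ((β^2 - a^2)^n / (((2*n+1).factorial : ℝ))) := by
    intro n
    rw [Uf_antidiagonal_sum]
    ring
  simp_rw [step2]
  rw [tsum_mul_left]
  rw [(sin_series β a ha).tsum_eq]

lemma main (β τ ω : ℝ) (hβ : 0 < β) (hτ : 0 < τ) (hω : β < |ω| * τ) :
    ftransform (kaiserBessel β τ) ω =
      (((2 * τ / besselI0 β) *
        (Real.sin (Real.sqrt (ω ^ 2 * τ ^ 2 - β ^ 2)) /
          Real.sqrt (ω ^ 2 * τ ^ 2 - β ^ 2)) : ℝ) : ℂ) := by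
  set a : ℝ := ω * τ with ha_def
  have hτ0 : τ ≠ 0 := hτ.ne'
  have hbessel : besselI0 β ≠ 0 := (besselI0_pos β).ne'
  have ha2 : β ^ 2 < a ^ 2 := by
    have h1 : |a| = |ω| * τ := by
      rw [ha_def, abs_mul, abs_of_pos hτ]
    nlinarith [abs_nonneg a, hβ.le, sq_abs a, hω, hβ]
  set c : ℕ → ℝ := fun k => (β^2/4)^k / (((k.factorial : ℝ))^2 * besselI0 β) with hc_def
  have hc_nonneg : ∀ k, 0 ≤ c k := by
    intro k
    rw [hc_def]
    have := (besselI0_pos β).le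
    positivity
  have hc_summable : Summable c := by
    have h1 := (bessel_summable β).div_const (besselI0 β)
    apply h1.congr
    intro k
    rw [bessel_term_eq, hc_def]
    simp only
    rw [div_div]
  set inner : ℕ → ℝ → ℂ := fun k t =>
    ((c k * (1-(t/τ)^2)^k : ℝ) : ℂ) * Complex.exp (-Complex.I * ((ω*t : ℝ) : ℂ)) with hinner_def
  set G : ℕ → ℝ → ℂ := fun k t => Set.indicator (Set.Icc (-τ) τ) (inner k) t with hG_def
  have hinner_cont : ∀ k, Continuous (inner k) := by
    intro k
    apply Continuous.mul
    · apply Complex.continuous_ofReal.comp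
      continuity
    · apply Complex.continuous_exp.comp
      apply Continuous.mul continuous_const
      apply Complex.continuous_ofReal.comp
      continuity
  -- pointwise identity
  have hpt : ∀ t : ℝ, (kaiserBessel β τ t : ℂ) * Complex.exp (-Complex.I * ((ω*t : ℝ) : ℂ))
      = ∑' k, G k t := by
    intro t
    by_cases ht : |t| ≤ τ
    · have htmem : t ∈ Set.Icc (-τ) τ := by
        rw [Set.mem_Icc]; constructor <;> [linarith [abs_le.mp ht |>.1]; exact (abs_le.mp ht).2]
      have hx0 : (0:ℝ) ≤ 1 - (t/τ)^2 := by
        have : |t/τ| ≤ 1 := by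
          rw [abs_div, abs_of_pos hτ, div_le_one hτ]; exact ht
        nlinarith [abs_le.mp this, sq_abs (t/τ)]
      have hkb : kaiserBessel β τ t = ∑' k, c k * (1-(t/τ)^2)^k := by
        unfold kaiserBessel
        rw [if_pos ht, besselI0_sqrt_eq β _ hx0, ← tsum_div_const]
        congr 1
        funext k
        rw [hc_def]
        simp only
        rw [div_div]
        ring
      rw [hkb]
      have : ((∑' k, c k * (1-(t/τ)^2)^k : ℝ) : ℂ) = ∑' k, ((c k * (1-(t/τ)^2)^k : ℝ) : ℂ) :=
        Complex.ofReal_tsum _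
      rw [this, ← tsum_mul_right]
      congr 1
      funext k
      rw [hG_def]
      simp only
      rw [Set.indicator_of_mem htmem]
    · have htnmem : t ∉ Set.Icc (-τ) τ := by
        rw [Set.mem_Icc]
        intro hmem
        exact ht (abs_le.mpr hmem)
      have hkb : kaiserBessel β τ t = 0 := by unfold kaiserBessel; rw [if_neg ht]
      rw [hkb]
      have : ∀ k, G k t = 0 := by
        intro k
        rw [hG_def]
        simp only
        rw [Set.indicator_of_notMem htnmem]
      rw [tsum_congr this]
      simp
  -- integrability and summability
  have hint : ∀ k, Integrable (G k) := by
    intro k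
    rw [hG_def]
    exact (((hinner_cont k).integrableOn_Icc)).integrable_indicator measurableSet_Icc
  have hnorm_exp : ∀ r : ℝ, ‖Complex.exp (-Complex.I * (r : ℂ))‖ = 1 := by
    intro r
    rw [Complex.norm_exp]
    simp
  have hbound : ∀ k, ∀ t ∈ Set.Icc (-τ) τ, ‖inner k t‖ ≤ c k := by
    intro k t htm
    rw [hinner_def]
    simp only
    rw [norm_mul, hnorm_exp, mul_one, Complex.norm_real, Real.norm_eq_abs]
    have hx0 : (0:ℝ) ≤ 1 - (t/τ)^2 := by
      have habs : |t| ≤ τ := abs_le.mpr (Set.mem_Icc.mp htm)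
      have : |t/τ| ≤ 1 := by
        rw [abs_div, abs_of_pos hτ, div_le_one hτ]; exact habs
      nlinarith [abs_le.mp this, sq_abs (t/τ)]
    have hx1 : (1-(t/τ)^2) ≤ 1 := by nlinarith [sq_nonneg (t/τ)]
    rw [abs_mul, abs_of_nonneg (hc_nonneg k), abs_of_nonneg (pow_nonneg hx0 k)]
    calc c k * (1-(t/τ)^2)^k ≤ c k * 1 := by
          exact mul_le_mul_of_nonneg_left (pow_le_one₀ hx0 hx1) (hc_nonneg k)
      _ = c k := mul_one _
  have hsum : Summable (fun k => ∫ t, ‖G k t‖) := by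
    refine Summable.of_nonneg_of_le (fun k => integral_nonneg (fun t => norm_nonneg _))
      (fun k => ?_) (hc_summable.mul_right (2*τ))
    have h1 : ∫ t, ‖G k t‖ = ∫ t in Set.Icc (-τ) τ, ‖inner k t‖ := by
      rw [hG_def]
      simp only
      rw [← MeasureTheory.integral_indicator measurableSet_Icc]
      congr 1
      funext t
      rw [norm_indicator_eq_indicator_norm]
    rw [h1]
    have h2 : ∫ t in Set.Icc (-τ) τ, ‖inner k t‖ ≤ ∫ _ in Set.Icc (-τ) τ, c k := by
      apply setIntegral_mono_on ((hinner_cont k).integrableOn_Icc).norm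
        (integrableOn_const measure_Icc_lt_top.ne) measurableSet_Icc (hbound k)
    apply h2.trans
    rw [setIntegral_const, Real.volume_real_Icc_of_le (by linarith), show τ - -τ = 2*τ by ring,
      smul_eq_mul]
    linarith
  -- the swap
  have hswap := hasSum_integral_of_summable_integral_norm (μ := volume) hint hsum
  have hft : ftransform (kaiserBessel β τ) ω = ∑' k, ∫ t, G k t := by
    unfold ftransform
    rw [show (∑' k, ∫ t, G k t) = ∫ t, ∑' k, G k t from hswap.tsum_eq]
    congr 1
    funext t
    exact hpt t
  -- per-k evaluation
  have hper : ∀ k, (∫ t, G k t) = ((τ * c k * (∫ u in (-1:ℝ)..1, (1-u^2)^k * Real.cos (a*u)) : ℝ) : ℂ) := by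
    intro k
    rw [hG_def]
    simp only
    rw [MeasureTheory.integral_indicator measurableSet_Icc, integral_Icc_eq_integral_Ioc,
      ← intervalIntegral.integral_of_le (by linarith : -τ ≤ τ)]
    have hcv := intervalIntegral.smul_integral_comp_mul_left (a := (-1:ℝ)) (b := 1)
      (f := inner k) τ
    rw [show τ * (-1:ℝ) = -τ by ring, show τ * (1:ℝ) = τ by ring] at hcv
    rw [← hcv]
    have harg : ∀ u : ℝ, inner k (τ * u)
        = (c k : ℂ) * ((((1-u^2)^k : ℝ) : ℂ) * Complex.exp (-Complex.I * ((a*u : ℝ) : ℂ))) := by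
      intro u
      rw [hinner_def]
      simp only
      rw [show τ * u / τ = u by field_simp]
      rw [show ω * (τ * u) = a * u by rw [ha_def]; ring]
      push_cast
      ring
    simp_rw [harg]
    rw [intervalIntegral.integral_const_mul, Jk]
    rw [Complex.real_smul]
    push_cast
    try ring
  rw [hft]
  have hper2 : ∀ k, (∫ t, G k t) = ((τ * c k *
      ∑' m : ℕ, (-1:ℝ)^m * a^(2*m) / (((2*m).factorial : ℝ)) * (2 * Iv m k) : ℝ) : ℂ) := by
    intro k
    rw [hper k, (cos_integral_hasSum a k).tsum_eq]
  rw [tsum_congr hper2, ← Complex.ofReal_tsum]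
  have : ∑' k, (τ * c k * ∑' m : ℕ, (-1:ℝ)^m * a^(2*m) / (((2*m).factorial : ℝ)) * (2 * Iv m k))
      = (2 * τ / besselI0 β) *
        (Real.sin (Real.sqrt (a ^ 2 - β ^ 2)) / Real.sqrt (a ^ 2 - β ^ 2)) := by
    rw [← key_sum β τ a hβ hτ ha2]
  rw [this]
  have haa : a ^ 2 = ω ^ 2 * τ ^ 2 := by rw [ha_def]; ring
  rw [haa]

end helpers

/-- For `|ω|τ > β`, the Fourier transform of the Kaiser–Bessel window is
`K̂_{β,τ}(ω) = (2τ/I₀(β)) · sin(√(ω²τ² − β²)) / √(ω²τ² − β²)`; in particular, for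
`β = Sτ` with `S > 0` and `ω = ℓ` with `|ℓ| > S`,
`K̂_{Sτ,τ}(ℓ) = (2/I₀(Sτ)) · sin(τ√(ℓ² − S²)) / √(ℓ² − S²)`. -/
theorem kaiserBessel_fourier_high (β τ ω : ℝ) (hβ : 0 < β) (hτ : 0 < τ)
    (hω : β < |ω| * τ) :
    ftransform (kaiserBessel β τ) ω =
      (((2 * τ / besselI0 β) *
        (Real.sin (Real.sqrt (ω ^ 2 * τ ^ 2 - β ^ 2)) /
          Real.sqrt (ω ^ 2 * τ ^ 2 - β ^ 2)) : ℝ) : ℂ) ∧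
    ∀ S : ℝ, 0 < S → ∀ ℓ : ℝ, S < |ℓ| →
      ftransform (kaiserBessel (S * τ) τ) ℓ =
        (((2 / besselI0 (S * τ)) *
          (Real.sin (τ * Real.sqrt (ℓ ^ 2 - S ^ 2)) /
            Real.sqrt (ℓ ^ 2 - S ^ 2)) : ℝ) : ℂ) := by
  constructor
  · exact main β τ ω hβ hτ hω
  · intro S hS ℓ hℓ
    have hβ' : 0 < S * τ := by positivity
    have hω' : S * τ < |ℓ| * τ := by
      exact mul_lt_mul_of_pos_right hℓ hτ
    have h := main (S * τ) τ ℓ hβ' hτ hω'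
    rw [h]
    have hdiff : ℓ ^ 2 * τ ^ 2 - (S * τ) ^ 2 = τ ^ 2 * (ℓ ^ 2 - S ^ 2) := by ring
    have hsq : Real.sqrt (ℓ ^ 2 * τ ^ 2 - (S * τ) ^ 2) = τ * Real.sqrt (ℓ ^ 2 - S ^ 2) := by
      rw [hdiff, Real.sqrt_mul (sq_nonneg τ), Real.sqrt_sq hτ.le]
    have hs_pos : 0 < Real.sqrt (ℓ ^ 2 - S ^ 2) := by
      apply Real.sqrt_pos.mpr
      nlinarith [abs_nonneg ℓ, sq_abs ℓ, hℓ, hS]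
    congr 1
    rw [hsq]
    have hs0 : Real.sqrt (ℓ ^ 2 - S ^ 2) ≠ 0 := hs_pos.ne'
    have hτ0 : τ ≠ 0 := hτ.ne'
    have hb0 : besselI0 (S * τ) ≠ 0 := (besselI0_pos _).ne'
    field_simp
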